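/- Let n ≥ 1 and let x > 1 be real. Then Φ_n(x) = ∏_{j=1}^n (x^{gcd(j,n)} − 1)^{cos(2πj/n)}, where the exponents are the real powers (rpow) of the positive reals x^{gcd(j,n)} − 1, and Φ_n denotes the n-th cyclotomic polynomial evaluated at x. -/

import Mathlib

open Polynomial Finset ArithmeticFunction
open scoped ArithmeticFunction.Moebius

lemma regroup (m : ℕ) (hm : 0 < m) (G : ℕ → ℝ) :
    ∑ j ∈ Icc 1 m, G j =
      ∑ d ∈ m.divisors, ∑ k ∈ (Icc 1 d).filter (fun k => Nat.gcd k d = 1),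
        G (k * (m / d)) := by
  rw [Finset.sum_sigma']
  refine Finset.sum_nbij' (i := fun j => ⟨m / Nat.gcd j m, j / Nat.gcd j m⟩)
    (j := fun p => p.2 * (m / p.1)) ?_ ?_ ?_ ?_ ?_
  · rintro j hj
    simp only [Finset.mem_Icc] at hj
    have hj0 : 0 < j := hj.1
    have hg : 0 < Nat.gcd j m := Nat.gcd_pos_of_pos_left _ hj0
    have hgd : Nat.gcd j m ∣ m := Nat.gcd_dvd_right _ _
    have hgj : Nat.gcd j m ∣ j := Nat.gcd_dvd_left _ _
    simp only [Finset.mem_sigma, Nat.mem_divisors, Finset.mem_filter, Finset.mem_Icc]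
    refine ⟨⟨Nat.div_dvd_of_dvd hgd, hm.ne'⟩, ⟨Nat.one_le_div_iff hg |>.mpr (Nat.le_of_dvd hj0 hgj),
      Nat.div_le_div_right hj.2⟩, Nat.coprime_div_gcd_div_gcd hg⟩
  · rintro ⟨d, k⟩ hp
    simp only [Finset.mem_sigma, Nat.mem_divisors, Finset.mem_filter, Finset.mem_Icc] at hp
    obtain ⟨⟨hd, _⟩, ⟨hk1, hkd⟩, hco⟩ := hp
    have hd0 : 0 < d := by omega
    have he : 0 < m / d := Nat.div_pos (Nat.le_of_dvd hm hd) hd0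
    simp only [Finset.mem_Icc]
    constructor
    · exact Nat.one_le_iff_ne_zero.mpr (Nat.mul_ne_zero (by omega) he.ne')
    · calc k * (m / d) ≤ d * (m / d) := Nat.mul_le_mul_right _ hkd
        _ = m := Nat.mul_div_cancel' hd
  · rintro j hj
    simp only [Finset.mem_Icc] at hj
    have hg : 0 < Nat.gcd j m := Nat.gcd_pos_of_pos_left _ hj.1
    have h1 : m / (m / Nat.gcd j m) = Nat.gcd j m :=
      Nat.div_div_self (Nat.gcd_dvd_right _ _) hm.ne'
    simp only [h1]
    exact Nat.div_mul_cancel (Nat.gcd_dvd_left _ _)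
  · rintro ⟨d, k⟩ hp
    simp only [Finset.mem_sigma, Nat.mem_divisors, Finset.mem_filter, Finset.mem_Icc] at hp
    obtain ⟨⟨hd, _⟩, ⟨hk1, hkd⟩, hco⟩ := hp
    have hd0 : 0 < d := by omega
    have he : 0 < m / d := Nat.div_pos (Nat.le_of_dvd hm hd) hd0
    have hgcd : Nat.gcd (k * (m / d)) m = m / d := by
      have h2 := Nat.gcd_mul_right k (m / d) d
      rw [Nat.mul_comm d (m / d), Nat.div_mul_cancel hd] at h2
      rw [h2, hco, one_mul]
    have hmd : m / (m / d) = d := Nat.div_div_self hd hm.ne'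
    ext <;> simp [hgcd, hmd, Nat.mul_div_cancel _ he]
  · rintro j hj
    simp only [Finset.mem_Icc] at hj
    rw [Nat.div_div_self (Nat.gcd_dvd_right _ _) hm.ne',
      Nat.div_mul_cancel (Nat.gcd_dvd_left _ _)]

lemma cos_sum_all (m : ℕ) (hm : 0 < m) :
    ∑ j ∈ Icc 1 m, Real.cos (2 * Real.pi * j / m) = if m = 1 then 1 else 0 := by
  rcases eq_or_lt_of_le (show 1 ≤ m from hm) with h1 | h2
  · simp [← h1, Real.cos_two_pi]
  · rw [if_neg (by omega)]
    have key : ∑ j ∈ Icc 1 m, Complex.exp ((2 * Real.pi * j / m : ℝ) * Complex.I) = 0 := by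
      set z9 : ℂ := Complex.exp ((2 * Real.pi / m : ℝ) * Complex.I) with hz9
      have hexp : ∀ j : ℕ, Complex.exp ((2 * Real.pi * j / m : ℝ) * Complex.I) = z9 ^ j := by
        intro j
        rw [hz9, ← Complex.exp_nat_mul]
        congr 1
        push_cast
        ring
      have hz9m : z9 ^ m = 1 := by
        rw [← Complex.exp_nat_mul]
        have : (m : ℂ) * (((2 * Real.pi / m : ℝ) : ℂ) * Complex.I) = 2 * Real.pi * Complex.I := by
          have hm0 : (m : ℂ) ≠ 0 := Nat.cast_ne_zero.mpr hm.ne'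
          push_cast
          field_simp
        rw [this, Complex.exp_two_pi_mul_I]
      have hz91 : z9 ≠ 1 := by
        intro h
        have hre : Real.cos (2 * Real.pi / m) = 1 := by
          have := congrArg Complex.re h
          rwa [hz9, Complex.exp_ofReal_mul_I_re, Complex.one_re] at this
        have hpos : 0 < 2 * Real.pi / m := by positivity
        have hlt : 2 * Real.pi / m < 2 * Real.pi := by
          rw [div_lt_iff₀ (by positivity)]
          nlinarith [Real.pi_pos, (by exact_mod_cast h2 : (1:ℝ) < m)]
        rw [Real.cos_eq_one_iff_of_lt_of_lt (by linarith) hlt] at hre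
        linarith
      calc ∑ j ∈ Icc 1 m, Complex.exp ((2 * Real.pi * j / m : ℝ) * Complex.I)
          = ∑ j ∈ Icc 1 m, z9 ^ j := Finset.sum_congr rfl fun j _ => hexp j
        _ = z9 * ∑ j ∈ Finset.range m, z9 ^ j := by
            rw [Finset.mul_sum]
            rw [show Icc 1 m = Finset.map ⟨Nat.succ, Nat.succ_injective⟩ (Finset.range m) by
              ext a
              simp only [Finset.mem_Icc, Finset.mem_map, Finset.mem_range,
                Function.Embedding.coeFn_mk]
              constructor
              · rintro ⟨h1, h2⟩; exact ⟨a - 1, by omega, by omega⟩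
              · rintro ⟨b, hb, rfl⟩; omega]
            rw [Finset.sum_map]
            exact Finset.sum_congr rfl fun j _ => by rw [Function.Embedding.coeFn_mk, pow_succ]; ring
        _ = 0 := by rw [geom_sum_eq hz91, hz9m]; simp
    have := congrArg Complex.re key
    rw [Complex.re_sum] at this
    simp only [Complex.exp_ofReal_mul_I_re] at this
    simpa using this

lemma cast_div_eq {n d k : ℕ} (hn : 0 < n) (hd : d ∣ n) (hd0 : 0 < d) :
    2 * Real.pi * (k * (n / d) : ℕ) / n = 2 * Real.pi * k / d := by
  obtain ⟨e, rfl⟩ := hd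
  have he : 0 < e := by
    rcases Nat.eq_zero_or_pos e with rfl | h
    · simp at hn
    · exact h
  rw [Nat.mul_div_cancel_left _ hd0]
  push_cast
  have hd0' : (d : ℝ) ≠ 0 := Nat.cast_ne_zero.mpr hd0.ne'
  have he0' : (e : ℝ) ≠ 0 := Nat.cast_ne_zero.mpr he.ne'
  field_simp

lemma cos_coprime_sum (m : ℕ) (hm : 0 < m) :
    ∑ k ∈ (Icc 1 m).filter (fun k => Nat.gcd k m = 1), Real.cos (2 * Real.pi * k / m)
      = (μ m : ℝ) := by
  have key := (ArithmeticFunction.sum_eq_iff_sum_smul_moebius_eq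
    (f := fun d => ∑ k ∈ (Icc 1 d).filter (fun k => Nat.gcd k d = 1),
      Real.cos (2 * Real.pi * k / d))
    (g := fun d => if d = 1 then (1 : ℝ) else 0)).mp ?_ m hm
  · rw [Nat.sum_divisorsAntidiagonal (fun a b => (μ a : ℤ) • (if b = 1 then (1:ℝ) else 0))] at key
    rw [← key, Finset.sum_eq_single m]
    · rw [Nat.div_self hm, if_pos rfl, zsmul_eq_mul, mul_one]
    · intro d hdm hdne
      rw [Nat.mem_divisors] at hdm
      have : m / d ≠ 1 := by
        intro h
        exact hdne (Nat.eq_of_dvd_of_div_eq_one hdm.1 h ▸ rfl)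
      rw [if_neg this, smul_zero]
    · intro h
      exact absurd (Nat.mem_divisors_self m hm.ne') h
  · intro N hN
    have hr := regroup N hN (fun j => Real.cos (2 * Real.pi * j / N))
    rw [← cos_sum_all N hN, hr]
    refine Finset.sum_congr rfl fun d hd => Finset.sum_congr rfl fun k hk => ?_
    rw [Nat.mem_divisors] at hd
    rw [Finset.mem_filter, Finset.mem_Icc] at hk
    have hd0 : 0 < d := by omega
    rw [cast_div_eq hN hd.1 hd0]

lemma gcd_mul_div {n d k : ℕ} (hd : d ∣ n) (hco : Nat.gcd k d = 1) :
    Nat.gcd (k * (n / d)) n = n / d := by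
  have h2 := Nat.gcd_mul_right k (n / d) d
  rw [Nat.mul_comm d (n / d), Nat.div_mul_cancel hd] at h2
  rw [h2, hco, one_mul]

lemma log_cyclotomic (x : ℝ) (hx : 1 < x) (n : ℕ) (hn : 0 < n) :
    Real.log ((cyclotomic n ℝ).eval x)
      = ∑ d ∈ n.divisors, (μ d : ℝ) * Real.log (x ^ (n / d) - 1) := by
  have key := (ArithmeticFunction.sum_eq_iff_sum_smul_moebius_eq
    (f := fun d => Real.log ((cyclotomic d ℝ).eval x))
    (g := fun N => Real.log (x ^ N - 1))).mp ?_ n hn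
  · rw [Nat.sum_divisorsAntidiagonal
      (fun a b => (μ a : ℤ) • Real.log (x ^ b - 1))] at key
    rw [← key]
    exact Finset.sum_congr rfl fun d _ => by push_cast [zsmul_eq_mul]; ring
  · intro N hN
    have hp := prod_cyclotomic_eq_X_pow_sub_one hN ℝ
    have he : ∏ d ∈ N.divisors, (cyclotomic d ℝ).eval x = x ^ N - 1 := by
      rw [← eval_prod, hp]; simp
    rw [← he, Real.log_prod]
    intro d _
    exact (cyclotomic_pos' d hx).ne'

theorem stmt10 (n : ℕ) (hn : 1 ≤ n) (x : ℝ) (hx : 1 < x) :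
    (cyclotomic n ℝ).eval x =
      ∏ j ∈ Finset.Icc 1 n,
        (x ^ (Nat.gcd j n) - 1) ^ Real.cos (2 * Real.pi * j / n) := by
  have hn0 : 0 < n := hn
  have hbase : ∀ j ∈ Icc 1 n, (0:ℝ) < x ^ (Nat.gcd j n) - 1 := by
    intro j hj
    rw [Finset.mem_Icc] at hj
    have hg : 0 < Nat.gcd j n := Nat.gcd_pos_of_pos_left _ hj.1
    have : (1:ℝ) < x ^ (Nat.gcd j n) := one_lt_pow₀ hx hg.ne'
    linarith
  have hfac : ∀ j ∈ Icc 1 n,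
      (0:ℝ) < (x ^ (Nat.gcd j n) - 1) ^ Real.cos (2 * Real.pi * j / n) :=
    fun j hj => Real.rpow_pos_of_pos (hbase j hj) _
  have hRpos : (0:ℝ) < ∏ j ∈ Icc 1 n,
      (x ^ (Nat.gcd j n) - 1) ^ Real.cos (2 * Real.pi * j / n) :=
    Finset.prod_pos hfac
  have hLpos : (0:ℝ) < (cyclotomic n ℝ).eval x := cyclotomic_pos' n hx
  have hlog : Real.log ((cyclotomic n ℝ).eval x) =
      Real.log (∏ j ∈ Icc 1 n,
        (x ^ (Nat.gcd j n) - 1) ^ Real.cos (2 * Real.pi * j / n)) := by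
    rw [Real.log_prod (fun j hj => (hfac j hj).ne'), log_cyclotomic x hx n hn0]
    have hstep : ∀ j ∈ Icc 1 n,
        Real.log ((x ^ (Nat.gcd j n) - 1) ^ Real.cos (2 * Real.pi * j / n))
          = Real.cos (2 * Real.pi * j / n) * Real.log (x ^ (Nat.gcd j n) - 1) :=
      fun j hj => Real.log_rpow (hbase j hj) _
    rw [Finset.sum_congr rfl hstep,
      regroup n hn0 (fun j => Real.cos (2 * Real.pi * j / n) * Real.log (x ^ (Nat.gcd j n) - 1))]
    refine Finset.sum_congr rfl fun d hd => ?_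
    rw [Nat.mem_divisors] at hd
    have hd0 : 0 < d := Nat.pos_of_dvd_of_pos hd.1 hn0
    rw [← cos_coprime_sum d hd0, Finset.sum_mul]
    refine Finset.sum_congr rfl fun k hk => ?_
    rw [Finset.mem_filter] at hk
    rw [cast_div_eq hn0 hd.1 hd0, gcd_mul_div hd.1 hk.2]
  calc (cyclotomic n ℝ).eval x = Real.exp (Real.log ((cyclotomic n ℝ).eval x)) :=
        (Real.exp_log hLpos).symm
    _ = _ := by rw [hlog, Real.exp_log hRpos]
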